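/- The nuclear numerical range is not unitarily invariant: there exist 2×2 complex matrices A, Z and a unitary U such that W(A | U Z U†) ≠ W(A | Z). Concretely, for Z = [[0,2],[0,0]], U = (1/√2)[[1,1],[1,−1]], and A = [[a,b],[c,d]], one has W(A|Z) = {a} while W(A|UZU†) = {(a+b+c+d)/2}. -/

import Mathlib

open Matrix

/-- Nuclear numerical range W(A|Z). -/
noncomputable def nuclearNR {n : ℕ} (A Z : Matrix (Fin n) (Fin n) ℂ) : Set ℂ :=
  {z | ∃ ψ : Fin n → ℂ, star ψ ⬝ᵥ ψ = 1 ∧ star ψ ⬝ᵥ (Z *ᵥ ψ) = 0 ∧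
    star ψ ⬝ᵥ (A *ᵥ ψ) = z}

/-- Standard numerical range W(A). -/
noncomputable def numRange {n : ℕ} (A : Matrix (Fin n) (Fin n) ℂ) : Set ℂ :=
  {z | ∃ ψ : Fin n → ℂ, star ψ ⬝ᵥ ψ = 1 ∧ star ψ ⬝ᵥ (A *ᵥ ψ) = z}

lemma sqrt2_sq : ((Real.sqrt 2 : ℝ) : ℂ) * ((Real.sqrt 2 : ℝ) : ℂ) = 2 := by
  rw [← Complex.ofReal_mul, Real.mul_self_sqrt (by norm_num)]
  norm_num

/-- The nuclear numerical range is not unitarily invariant: with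
`Z = !![0,2;0,0]` and `U = (1/√2)·!![1,1;1,-1]` there is a matrix `A` with
`W(A|UZU†) ≠ W(A|Z)`. -/
theorem nuclearNR_not_unitarily_invariant :
    ∃ A : Matrix (Fin 2) (Fin 2) ℂ,
      ∀ Z U : Matrix (Fin 2) (Fin 2) ℂ,
        Z = !![0, 2; 0, 0] →
        U = ((1 / Real.sqrt 2 : ℝ) : ℂ) • !![1, 1; 1, -1] →
        Uᴴ * U = 1 ∧ nuclearNR A (U * Z * Uᴴ) ≠ nuclearNR A Z := by
  refine ⟨!![0, 0; 0, 1], ?_⟩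
  intro Z U hZ hU
  have hs2 : ((Real.sqrt 2 : ℝ) : ℂ) ≠ 0 := by
    simp [Complex.ofReal_ne_zero]
  constructor
  · subst hU
    ext i j
    fin_cases i <;> fin_cases j <;>
      simp [Matrix.mul_apply, Fin.sum_univ_two, Matrix.one_apply, div_mul_div_comm] <;>
      field_simp <;>
      rw [sq, sqrt2_sq] <;> ring
  · have hM : U * Z * Uᴴ = !![1, -1; 1, -1] := by
      subst hU hZ
      ext i j
      fin_cases i <;> fin_cases j <;>
        simp [Matrix.mul_apply, Fin.sum_univ_two, div_mul_div_comm] <;>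
        field_simp <;> rw [sq, sqrt2_sq] <;> ring
    rw [hM, hZ]
    intro h
    have hmem : ((1:ℂ)/2) ∈ nuclearNR !![(0:ℂ), 0; 0, 1] !![1, -1; 1, -1] := by
      refine ⟨![((1 / Real.sqrt 2 : ℝ) : ℂ), ((1 / Real.sqrt 2 : ℝ) : ℂ)], ?_, ?_, ?_⟩ <;>
        simp [dotProduct, Fin.sum_univ_two, mulVec, Complex.conj_ofReal] <;>
        field_simp <;> rw [sq, sqrt2_sq] <;> ring
    rw [h] at hmem
    obtain ⟨ψ, hnorm, hcon, hval⟩ := hmem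
    simp [dotProduct, Fin.sum_univ_two, mulVec] at hnorm hcon hval
    rcases hcon with h0 | h1
    · have : (starRingEnd ℂ) (ψ 0) = 0 := by
        simpa using congrArg (starRingEnd ℂ) h0
      rw [this, zero_mul, zero_add] at hnorm
      rw [hnorm] at hval
      norm_num at hval
    · rw [h1] at hval
      simp at hval
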